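/- Let (X,d,μ) be a metric measure space with μ Borel regular, and suppose every (N₀+1)-tuple of real-valued Lipschitz functions on X is dependent to first order at μ-almost every point. Then for every measurable set A ⊆ X with μ(A) > 0 there exist a measurable set V ⊆ A with μ(V) > 0, an integer N with 0 ≤ N ≤ N₀, and an N-tuple x = (x¹,…,x^N) of real-valued Lipschitz functions on X such that: for every Lipschitz function f : X → ℝ there exists a measurable function df : V → ℝ^N with Lip_x( f(·) − df(x)·x(·) ) = 0 for μ-a.e. x ∈ V, and df is unique up to μ-null sets (any two such functions agree μ-a.e. on V). -/

import Mathlib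

open Metric MeasureTheory Filter Set
open scoped NNReal ENNReal

/-- The variation of `f` on the ball `B(x,r)`: `sup { |f y - f x| / r : y ∈ B(x,r) }`. -/
noncomputable def varBall {X : Type*} [MetricSpace X] (f : X → ℝ) (x : X) (r : ℝ) : ℝ :=
  sSup ((fun y => |f y - f x| / r) '' Metric.ball x r)

/-- Lower pointwise Lipschitz constant `lip_x f`. -/
noncomputable def lipLow {X : Type*} [MetricSpace X] (f : X → ℝ) (x : X) : ℝ :=
  Filter.liminf (fun r => varBall f x r) (nhdsWithin 0 (Set.Ioi (0:ℝ)))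

/-- Upper pointwise Lipschitz constant `Lip_x f`. -/
noncomputable def lipUp {X : Type*} [MetricSpace X] (f : X → ℝ) (x : X) : ℝ :=
  Filter.limsup (fun r => varBall f x r) (nhdsWithin 0 (Set.Ioi (0:ℝ)))

/-- `f` is a real-valued Lipschitz function. -/
def IsLip {X : Type*} [MetricSpace X] (f : X → ℝ) : Prop := ∃ K : ℝ≥0, LipschitzWith K f

/-- `μ` is doubling with constant `C`. -/
def DoublingWith {X : Type*} [MetricSpace X] [MeasurableSpace X] (μ : Measure X) (C : ℝ≥0) :
    Prop :=
  ∀ (x : X) (r : ℝ), 0 < r → μ (Metric.ball x (2 * r)) ≤ (C : ℝ≥0∞) * μ (Metric.ball x r)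

/-- `(X, μ)` admits a `p`-Poincaré inequality with constant `L`. -/
def PoincareIneq {X : Type*} [MetricSpace X] [MeasurableSpace X] (μ : Measure X) (p L : ℝ) :
    Prop :=
  (∀ (x : X) (r : ℝ), 0 < r → 0 < μ (Metric.ball x r) ∧ μ (Metric.ball x r) < ⊤) ∧
  ∀ f : X → ℝ, IsLip f → ∀ (x : X) (r : ℝ), 0 < r →
    ⨍ y in Metric.ball x r, |f y - ⨍ z in Metric.ball x r, f z ∂μ| ∂μ ≤
      L * r * (⨍ z in Metric.ball x (L * r), (lipLow f z) ^ p ∂μ) ^ (1 / p)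

/-- An `N`-tuple of functions is dependent to first order at `x`. -/
def DependentAt {X : Type*} [MetricSpace X] {N : ℕ} (f : Fin N → X → ℝ) (x : X) : Prop :=
  ∃ l : Fin N → ℝ, l ≠ 0 ∧ lipUp (fun y => ∑ i, l i * f i y) x = 0

/-- A measurable differentiable structure of dimension at most `N₀`. -/
def HasMDS {X : Type*} [MetricSpace X] [MeasurableSpace X] (μ : Measure X) (N₀ : ℕ) : Prop :=
  ∃ (ι : Type) (_ : Countable ι) (U : ι → Set X) (N : ι → ℕ)
      (φ : (i : ι) → Fin (N i) → X → ℝ),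
    (∀ i, MeasurableSet (U i) ∧ 0 < μ (U i)) ∧
    μ (Set.univ \ ⋃ i, U i) = 0 ∧
    (∀ i, N i ≤ N₀) ∧
    (∀ i k, IsLip (φ i k)) ∧
    (∀ f : X → ℝ, IsLip f → ∀ i, ∃ df : X → (Fin (N i) → ℝ),
      Measurable df ∧
      (∀ᵐ x ∂(μ.restrict (U i)),
        lipUp (fun y => f y - ∑ k, df x k * φ i k y) x = 0) ∧
      ∀ dg : X → (Fin (N i) → ℝ), Measurable dg →
        (∀ᵐ x ∂(μ.restrict (U i)),
          lipUp (fun y => f y - ∑ k, dg x k * φ i k y) x = 0) →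
        (∀ᵐ x ∂(μ.restrict (U i)), df x = dg x))

namespace CheegerAux

variable {X : Type*} [MetricSpace X]

lemma elt_le {g : X → ℝ} {K : ℝ≥0} (hg : LipschitzWith K g) {x y : X} {r : ℝ}
    (hr : 0 < r) (hy : y ∈ Metric.ball x r) : |g y - g x| / r ≤ K := by
  rw [div_le_iff₀ hr]
  have := hg.dist_le_mul y x
  rw [Real.dist_eq] at this
  calc |g y - g x| ≤ K * dist y x := this
    _ ≤ K * r := by
        exact mul_le_mul_of_nonneg_left (mem_ball.1 hy).le K.coe_nonneg

lemma varBall_bddAbove {g : X → ℝ} {K : ℝ≥0} (hg : LipschitzWith K g) {x : X} {r : ℝ}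
    (hr : 0 < r) : BddAbove ((fun y => |g y - g x| / r) '' Metric.ball x r) := by
  refine ⟨K, ?_⟩
  rintro v ⟨y, hy, rfl⟩
  exact elt_le hg hr hy

lemma varBall_nonneg {g : X → ℝ} {K : ℝ≥0} (hg : LipschitzWith K g) {x : X} {r : ℝ}
    (hr : 0 < r) : 0 ≤ varBall g x r := by
  have h0 : (0:ℝ) ∈ (fun y => |g y - g x| / r) '' Metric.ball x r :=
    ⟨x, mem_ball_self hr, by simp⟩
  exact le_csSup (varBall_bddAbove hg hr) h0

lemma varBall_le {g : X → ℝ} {K : ℝ≥0} (hg : LipschitzWith K g) {x : X} {r : ℝ}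
    (hr : 0 < r) : varBall g x r ≤ K := by
  apply Real.sSup_le _ K.coe_nonneg
  rintro v ⟨y, hy, rfl⟩
  exact elt_le hg hr hy

lemma varBall_add_le {g h : X → ℝ} {K L : ℝ≥0} (hg : LipschitzWith K g)
    (hh : LipschitzWith L h) {x : X} {r : ℝ} (hr : 0 < r) :
    varBall (fun y => g y + h y) x r ≤ varBall g x r + varBall h x r := by
  apply Real.sSup_le _ (add_nonneg (varBall_nonneg hg hr) (varBall_nonneg hh hr))
  rintro v ⟨y, hy, rfl⟩
  show |g y + h y - (g x + h x)| / r ≤ _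
  have h1 : |g y + h y - (g x + h x)| / r ≤ |g y - g x| / r + |h y - h x| / r := by
    rw [← add_div]
    gcongr
    calc |g y + h y - (g x + h x)| = |(g y - g x) + (h y - h x)| := by ring_nf
      _ ≤ |g y - g x| + |h y - h x| := abs_add_le _ _
  refine h1.trans (add_le_add ?_ ?_)
  · exact le_csSup (varBall_bddAbove hg hr) ⟨y, hy, rfl⟩
  · exact le_csSup (varBall_bddAbove hh hr) ⟨y, hy, rfl⟩

lemma varBall_smul_le {g : X → ℝ} {K : ℝ≥0} (hg : LipschitzWith K g) {c : ℝ} {x : X} {r : ℝ}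
    (hr : 0 < r) : varBall (fun y => c * g y) x r ≤ |c| * varBall g x r := by
  apply Real.sSup_le _ (mul_nonneg (abs_nonneg c) (varBall_nonneg hg hr))
  rintro v ⟨y, hy, rfl⟩
  show |c * g y - c * g x| / r ≤ _
  have : |c * g y - c * g x| / r = |c| * (|g y - g x| / r) := by
    rw [← mul_sub, abs_mul, mul_div_assoc]
  rw [this]
  exact mul_le_mul_of_nonneg_left (le_csSup (varBall_bddAbove hg hr) ⟨y, hy, rfl⟩)
    (abs_nonneg c)

lemma varBall_neg (g : X → ℝ) (x : X) (r : ℝ) :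
    varBall (fun y => -(g y)) x r = varBall g x r := by
  unfold varBall
  congr 1
  apply image_congr
  intro y _
  rw [show -g y - -g x = -(g y - g x) by ring, abs_neg]

end CheegerAux


namespace CheegerAux
variable {X : Type*} [MetricSpace X]

local notation "l0" => nhdsWithin (0:ℝ) (Set.Ioi (0:ℝ))

lemma ev_pos : ∀ᶠ r in l0, (0:ℝ) < r :=
  eventually_mem_nhdsWithin.mono fun _ h => h

lemma lipUp_bddAboveF {g : X → ℝ} {K : ℝ≥0} (hg : LipschitzWith K g) (x : X) :
    IsBoundedUnder (· ≤ ·) l0 (fun r => varBall g x r) :=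
  ⟨K, eventually_map.2 (by filter_upwards [ev_pos] with r hr using varBall_le hg hr)⟩

lemma lipUp_cobddF {g : X → ℝ} {K : ℝ≥0} (hg : LipschitzWith K g) (x : X) :
    IsCoboundedUnder (· ≤ ·) l0 (fun r => varBall g x r) :=
  isCoboundedUnder_le_of_eventually_le _
    (by filter_upwards [ev_pos] with r hr using varBall_nonneg hg hr)

lemma lipUp_le {g : X → ℝ} {K : ℝ≥0} (hg : LipschitzWith K g) (x : X) :
    lipUp g x ≤ K :=
  limsup_le_of_le (lipUp_cobddF hg x)
    (by filter_upwards [ev_pos] with r hr using varBall_le hg hr)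

lemma lipUp_nonneg {g : X → ℝ} {K : ℝ≥0} (hg : LipschitzWith K g) (x : X) :
    0 ≤ lipUp g x :=
  le_limsup_of_frequently_le
    ((ev_pos.mono fun r hr => varBall_nonneg hg hr (x := x)).frequently)
    (lipUp_bddAboveF hg x)

lemma lipUp_const (c : ℝ) (x : X) : lipUp (fun _ => c) x = 0 := by
  have h : ∀ᶠ r in l0, varBall (fun _ => c) x r = 0 := by
    filter_upwards [ev_pos] with r hr
    have : (fun y => |c - c| / r) '' Metric.ball x r = {0} := by
      rw [show (fun (_ : X) => |c - c| / r) = fun _ => (0:ℝ) by funext; simp]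
      exact (Metric.nonempty_ball.2 hr).image_const 0
    rw [varBall, this, csSup_singleton]
  rw [lipUp, limsup_congr h, limsup_const]

lemma lipUp_add_le {g h : X → ℝ} {K L : ℝ≥0} (hg : LipschitzWith K g)
    (hh : LipschitzWith L h) (x : X) :
    lipUp (fun y => g y + h y) x ≤ lipUp g x + lipUp h x := by
  have hgh : LipschitzWith (K + L) (fun y => g y + h y) := hg.add hh
  apply le_of_forall_pos_le_add
  intro ε hε
  have h1 : ∀ᶠ r in l0, varBall g x r < lipUp g x + ε / 2 :=
    eventually_lt_of_limsup_lt (lt_add_of_pos_right _ (half_pos hε)) (lipUp_bddAboveF hg x)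
  have h2 : ∀ᶠ r in l0, varBall h x r < lipUp h x + ε / 2 :=
    eventually_lt_of_limsup_lt (lt_add_of_pos_right _ (half_pos hε)) (lipUp_bddAboveF hh x)
  apply limsup_le_of_le (lipUp_cobddF hgh x)
  filter_upwards [ev_pos, h1, h2] with r hr hg1 hh1
  calc varBall (fun y => g y + h y) x r ≤ varBall g x r + varBall h x r :=
        varBall_add_le hg hh hr
    _ ≤ (lipUp g x + ε/2) + (lipUp h x + ε/2) := by linarith
    _ = lipUp g x + lipUp h x + ε := by ring

lemma lipUp_smul_le {g : X → ℝ} {K : ℝ≥0} (hg : LipschitzWith K g) (c : ℝ) (x : X) :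
    lipUp (fun y => c * g y) x ≤ |c| * lipUp g x := by
  have hcg : LipschitzWith (‖c‖₊ * K) (fun y => c * g y) := by
    apply LipschitzWith.of_dist_le_mul
    intro a b
    rw [Real.dist_eq, ← mul_sub, abs_mul]
    calc |c| * |g a - g b| ≤ |c| * (K * dist a b) := by
          apply mul_le_mul_of_nonneg_left _ (abs_nonneg c)
          rw [← Real.dist_eq]; exact hg.dist_le_mul a b
      _ = ↑(‖c‖₊ * K) * dist a b := by
          rw [NNReal.coe_mul, coe_nnnorm, Real.norm_eq_abs]; ring
  apply le_of_forall_pos_le_add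
  intro ε hε
  have hε' : 0 < ε / (|c| + 1) := by positivity
  have h1 : ∀ᶠ r in l0, varBall g x r < lipUp g x + ε / (|c| + 1) :=
    eventually_lt_of_limsup_lt (lt_add_of_pos_right _ hε') (lipUp_bddAboveF hg x)
  apply limsup_le_of_le (lipUp_cobddF hcg x)
  filter_upwards [ev_pos, h1] with r hr hg1
  calc varBall (fun y => c * g y) x r ≤ |c| * varBall g x r := varBall_smul_le hg hr
    _ ≤ |c| * (lipUp g x + ε / (|c| + 1)) :=
        mul_le_mul_of_nonneg_left hg1.le (abs_nonneg c)
    _ = |c| * lipUp g x + |c| * (ε / (|c| + 1)) := by ring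
    _ ≤ |c| * lipUp g x + ε := by
        have h2 : |c| * (ε / (|c| + 1)) ≤ ε := by
          rw [mul_div_assoc']
          rw [div_le_iff₀ (by positivity)]
          nlinarith [abs_nonneg c]
        linarith

lemma lipUp_neg (g : X → ℝ) (x : X) : lipUp (fun y => -(g y)) x = lipUp g x := by
  unfold lipUp
  congr 1
  funext r
  exact varBall_neg g x r

end CheegerAux

namespace CheegerAux
variable {X : Type*} [MetricSpace X]

local notation "l0" => nhdsWithin (0:ℝ) (Set.Ioi (0:ℝ))

lemma varBall_of_nonpos {g : X → ℝ} {x : X} {r : ℝ} (hr : r ≤ 0) : varBall g x r = 0 := by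
  rw [varBall, Metric.ball_eq_empty.2 hr, Set.image_empty, Real.sSup_empty]

lemma lowerSemicontinuous_varBall {g : X → ℝ} {K : ℝ≥0} (hg : LipschitzWith K g) {q : ℝ}
    (hq : 0 < q) : LowerSemicontinuous fun x => varBall g x q := by
  intro x v hv
  obtain ⟨w, hw, hvw⟩ := exists_lt_of_lt_csSup
    (Set.Nonempty.image _ ⟨x, mem_ball_self hq⟩) hv
  obtain ⟨y, hy, rfl⟩ := hw
  have hc : Continuous fun x' : X => |g y - g x'| / q :=
    ((continuous_const.sub hg.continuous).abs).div_const q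
  have hU : IsOpen {x' : X | dist y x' < q ∧ v < |g y - g x'| / q} := by
    apply IsOpen.inter
    · exact isOpen_lt (Continuous.dist continuous_const continuous_id) continuous_const
    · exact isOpen_lt continuous_const hc
  have hxU : x ∈ {x' : X | dist y x' < q ∧ v < |g y - g x'| / q} :=
    ⟨mem_ball.1 hy, hvw⟩
  filter_upwards [hU.mem_nhds hxU] with x' hx'
  calc v < |g y - g x'| / q := hx'.2
    _ ≤ varBall g x' q := le_csSup (varBall_bddAbove hg hq) ⟨y, mem_ball.2 hx'.1, rfl⟩

variable [MeasurableSpace X] [BorelSpace X]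

lemma measurable_varBall {g : X → ℝ} {K : ℝ≥0} (hg : LipschitzWith K g) (q : ℝ) :
    Measurable fun x => varBall g x q := by
  rcases le_or_gt q 0 with hq | hq
  · simp only [varBall_of_nonpos hq]; exact measurable_const
  · exact (lowerSemicontinuous_varBall hg hq).measurable

lemma measurable_lipUp {g : X → ℝ} {K : ℝ≥0} (hg : LipschitzWith K g) :
    Measurable fun x => lipUp g x := by
  classical
  -- countable rational grids
  set Q : ℕ → Type := fun n => {q : ℚ // 0 < (q:ℝ) ∧ (q:ℝ) < 1 / ((n:ℝ) + 1)} with hQ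
  haveI : ∀ n, Countable (Q n) := fun n => Subtype.countable
  have hQne : ∀ n, Nonempty (Q n) := by
    intro n
    obtain ⟨q, hq0, hq1⟩ := exists_rat_btwn (show (0:ℝ) < 1 / ((n:ℝ)+1) by positivity)
    exact ⟨⟨q, by exact_mod_cast hq0, hq1⟩⟩
  haveI := hQne
  set G : ℕ → X → ℝ := fun n x => ⨆ q : Q n, varBall g x (q : ℚ) with hG
  have hGbdd : ∀ n x, BddAbove (Set.range fun q : Q n => varBall g x ((q:ℚ):ℝ)) := by
    intro n x
    refine ⟨K, ?_⟩
    rintro v ⟨q, rfl⟩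
    exact varBall_le hg q.2.1
  have hGnonneg : ∀ n x, 0 ≤ G n x := by
    intro n x
    obtain ⟨q⟩ := hQne n
    exact (varBall_nonneg hg q.2.1).trans (le_ciSup (hGbdd n x) q)
  have hGmeas : ∀ n, Measurable (G n) :=
    fun n => Measurable.iSup fun q => measurable_varBall hg _
  have key : ∀ x r, 0 < r → ∀ n : ℕ, r < 1 / ((n:ℝ)+1) → varBall g x r ≤ G n x := by
    intro x r hr n hrn
    apply Real.sSup_le _ (hGnonneg n x)
    rintro v ⟨y, hy, rfl⟩
    have hd : dist y x < r := mem_ball.1 hy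
    obtain ⟨q, hq1, hq2⟩ := exists_rat_btwn hd
    have hq0 : 0 < (q:ℝ) := lt_of_le_of_lt dist_nonneg hq1
    have h1 : |g y - g x| / r ≤ |g y - g x| / (q:ℝ) :=
      div_le_div_of_nonneg_left (abs_nonneg _) hq0 hq2.le
    have h2 : |g y - g x| / (q:ℝ) ≤ varBall g x (q:ℝ) :=
      le_csSup (varBall_bddAbove hg hq0) ⟨y, mem_ball.2 hq1, rfl⟩
    have h3 : varBall g x ((q:ℚ):ℝ) ≤ G n x :=
      le_ciSup (hGbdd n x) (⟨q, hq0, hq2.trans hrn⟩ : Q n)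
    exact h1.trans (h2.trans h3)
  have heq : ∀ x, lipUp g x = ⨅ n, G n x := by
    intro x
    apply le_antisymm
    · apply le_ciInf
      intro n
      apply limsup_le_of_le (lipUp_cobddF hg x)
      have hmem : ∀ᶠ r in l0, r < 1 / ((n:ℝ)+1) := by
        apply eventually_nhdsWithin_of_eventually_nhds
        have : Set.Iio (1 / ((n:ℝ)+1)) ∈ nhds (0:ℝ) := Iio_mem_nhds (by positivity)
        exact eventually_of_mem this fun r hr => hr
      filter_upwards [ev_pos, hmem] with r hr hrn
      exact key x r hr n hrn
    · rw [lipUp, limsup_eq]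
      apply le_csInf
      · exact ⟨K, by filter_upwards [ev_pos] with r hr using varBall_le hg hr⟩
      · rintro a ha
        simp only [Set.mem_setOf_eq] at ha
        rw [eventually_nhdsWithin_iff, Metric.eventually_nhds_iff] at ha
        obtain ⟨δ, hδ, hball⟩ := ha
        obtain ⟨n, hn⟩ := exists_nat_one_div_lt hδ
        have hGn : G n x ≤ a := by
          apply ciSup_le
          intro q
          have h1 : dist ((q:ℚ):ℝ) 0 < δ := by
            rw [Real.dist_eq, sub_zero, abs_of_pos q.2.1]
            exact q.2.2.trans hn
          exact hball h1 q.2.1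
        exact ciInf_le_of_le ⟨0, by rintro v ⟨m, rfl⟩; exact hGnonneg m x⟩ n hGn
  simp only [heq]
  exact Measurable.iInf hGmeas

end CheegerAux

namespace CheegerAux
variable {X : Type*} [MetricSpace X]

def comb {n : ℕ} (h : Fin n → X → ℝ) (lam : Fin n → ℝ) : X → ℝ := fun y => ∑ i, lam i * h i y

lemma dependentAt_iff {n : ℕ} (h : Fin n → X → ℝ) (x : X) :
    DependentAt h x ↔ ∃ l : Fin n → ℝ, l ≠ 0 ∧ lipUp (comb h l) x = 0 := Iff.rfl

variable {n : ℕ} {h : Fin n → X → ℝ} {K : Fin n → ℝ≥0}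

lemma lipschitzWith_comb (hL : ∀ i, LipschitzWith (K i) (h i)) (lam : Fin n → ℝ) :
    LipschitzWith (∑ i, ‖lam i‖₊ * K i) (comb h lam) := by
  apply LipschitzWith.of_dist_le_mul
  intro a b
  rw [Real.dist_eq]
  have h1 : comb h lam a - comb h lam b = ∑ i, lam i * (h i a - h i b) := by
    rw [comb, comb, ← Finset.sum_sub_distrib]
    congr 1; funext i; ring
  rw [h1]
  calc |∑ i, lam i * (h i a - h i b)| ≤ ∑ i, |lam i * (h i a - h i b)| :=
        Finset.abs_sum_le_sum_abs _ _
    _ = ∑ i, |lam i| * |h i a - h i b| := by simp [abs_mul]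
    _ ≤ ∑ i, |lam i| * ((K i : ℝ) * dist a b) := by
        apply Finset.sum_le_sum
        intro i _
        apply mul_le_mul_of_nonneg_left _ (abs_nonneg _)
        rw [← Real.dist_eq]; exact (hL i).dist_le_mul a b
    _ = (↑(∑ i, ‖lam i‖₊ * K i) : ℝ) * dist a b := by
        push_cast [coe_nnnorm, Real.norm_eq_abs]
        rw [Finset.sum_mul]
        congr 1; funext i; ring

lemma theta_nonneg (hL : ∀ i, LipschitzWith (K i) (h i)) (lam : Fin n → ℝ) (x : X) :
    0 ≤ lipUp (comb h lam) x :=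
  lipUp_nonneg (lipschitzWith_comb hL lam) x

lemma comb_zero_eq : comb h (0 : Fin n → ℝ) = fun _ => (0:ℝ) := by
  funext y; simp [comb]

lemma theta_zero (x : X) : lipUp (comb h (0 : Fin n → ℝ)) x = 0 := by
  rw [comb_zero_eq]; exact lipUp_const 0 x

lemma comb_add_eq (a b : Fin n → ℝ) :
    comb h (a + b) = fun y => comb h a y + comb h b y := by
  funext y; simp [comb, add_mul, Finset.sum_add_distrib]

lemma comb_smul_eq (c : ℝ) (a : Fin n → ℝ) :
    comb h (c • a) = fun y => c * comb h a y := by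
  funext y; simp [comb, Finset.mul_sum, mul_assoc]

lemma theta_add_le (hL : ∀ i, LipschitzWith (K i) (h i)) (a b : Fin n → ℝ) (x : X) :
    lipUp (comb h (a + b)) x ≤ lipUp (comb h a) x + lipUp (comb h b) x := by
  rw [comb_add_eq]
  exact lipUp_add_le (lipschitzWith_comb hL a) (lipschitzWith_comb hL b) x

lemma theta_smul_le (hL : ∀ i, LipschitzWith (K i) (h i)) (c : ℝ) (a : Fin n → ℝ) (x : X) :
    lipUp (comb h (c • a)) x ≤ |c| * lipUp (comb h a) x := by
  rw [comb_smul_eq]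
  exact lipUp_smul_le (lipschitzWith_comb hL a) c x

lemma theta_smul_ge (hL : ∀ i, LipschitzWith (K i) (h i)) {c : ℝ} (hc : c ≠ 0)
    (a : Fin n → ℝ) (x : X) :
    |c| * lipUp (comb h a) x ≤ lipUp (comb h (c • a)) x := by
  have h1 : lipUp (comb h a) x ≤ |c⁻¹| * lipUp (comb h (c • a)) x := by
    have := theta_smul_le hL c⁻¹ (c • a) x
    rwa [smul_smul, inv_mul_cancel₀ hc, one_smul] at this
  calc |c| * lipUp (comb h a) x ≤ |c| * (|c⁻¹| * lipUp (comb h (c • a)) x) :=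
        mul_le_mul_of_nonneg_left h1 (abs_nonneg c)
    _ = lipUp (comb h (c • a)) x := by
        rw [← mul_assoc, ← abs_mul, mul_inv_cancel₀ hc, abs_one, one_mul]

lemma theta_norm_le (hL : ∀ i, LipschitzWith (K i) (h i)) (lam : Fin n → ℝ) (x : X) :
    lipUp (comb h lam) x ≤ (∑ i, (K i : ℝ)) * ‖lam‖ := by
  calc lipUp (comb h lam) x ≤ (↑(∑ i, ‖lam i‖₊ * K i) : ℝ) :=
        lipUp_le (lipschitzWith_comb hL lam) x
    _ = ∑ i, |lam i| * (K i : ℝ) := by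
        push_cast [coe_nnnorm, Real.norm_eq_abs]; rfl
    _ ≤ ∑ i, ‖lam‖ * (K i : ℝ) := by
        apply Finset.sum_le_sum
        intro i _
        apply mul_le_mul_of_nonneg_right _ (K i).coe_nonneg
        rw [← Real.norm_eq_abs]
        exact norm_le_pi_norm lam i
    _ = (∑ i, (K i : ℝ)) * ‖lam‖ := by
        rw [Finset.sum_mul]
        congr 1; funext i; ring

lemma theta_lip (hL : ∀ i, LipschitzWith (K i) (h i)) (a b : Fin n → ℝ) (x : X) :
    lipUp (comb h a) x ≤ lipUp (comb h b) x + (∑ i, (K i : ℝ)) * ‖a - b‖ := by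
  have h1 : comb h a = fun y => comb h b y + comb h (a - b) y := by
    have : a = b + (a - b) := by ring
    rw [this, comb_add_eq]
    simp
  calc lipUp (comb h a) x = lipUp (fun y => comb h b y + comb h (a - b) y) x := by rw [h1]
    _ ≤ lipUp (comb h b) x + lipUp (comb h (a - b)) x :=
        lipUp_add_le (lipschitzWith_comb hL b) (lipschitzWith_comb hL (a - b)) x
    _ ≤ lipUp (comb h b) x + (∑ i, (K i : ℝ)) * ‖a - b‖ := by
        linarith [theta_norm_le hL (a - b) x]

lemma continuous_theta (hL : ∀ i, LipschitzWith (K i) (h i)) (x : X) :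
    Continuous fun lam : Fin n → ℝ => lipUp (comb h lam) x := by
  rw [Metric.continuous_iff]
  intro a ε hε
  set C : ℝ := ∑ i, (K i : ℝ) with hC
  have hC0 : 0 ≤ C := Finset.sum_nonneg fun i _ => (K i).coe_nonneg
  refine ⟨ε / (C + 1), by positivity, ?_⟩
  intro b hb
  rw [Real.dist_eq]
  have h1 : lipUp (comb h b) x - lipUp (comb h a) x ≤ C * ‖b - a‖ := by
    linarith [theta_lip hL b a x]
  have h2 : lipUp (comb h a) x - lipUp (comb h b) x ≤ C * ‖b - a‖ := by
    have := theta_lip hL a b x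
    rw [norm_sub_rev] at this
    linarith
  have h3 : |lipUp (comb h b) x - lipUp (comb h a) x| ≤ C * ‖b - a‖ :=
    abs_sub_le_iff.2 ⟨h1, h2⟩
  have h4 : ‖b - a‖ < ε / (C + 1) := by rwa [← dist_eq_norm]
  calc |lipUp (comb h b) x - lipUp (comb h a) x| ≤ C * ‖b - a‖ := h3
    _ ≤ C * (ε / (C + 1)) := mul_le_mul_of_nonneg_left h4.le hC0
    _ < ε := by
        rw [mul_div_assoc']
        rw [div_lt_iff₀ (by positivity)]
        nlinarith

end CheegerAux

namespace CheegerAux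
variable {X : Type*} [MetricSpace X]
variable {n : ℕ} {h : Fin n → X → ℝ} {K : Fin n → ℝ≥0}

lemma theta_sphere_zero (hL : ∀ i, LipschitzWith (K i) (h i)) {x : X} {l : Fin n → ℝ}
    (hl0 : l ≠ 0) (hl : lipUp (comb h l) x = 0) :
    lipUp (comb h (‖l‖⁻¹ • l)) x = 0 := by
  have h1 : lipUp (comb h (‖l‖⁻¹ • l)) x ≤ |‖l‖⁻¹| * lipUp (comb h l) x :=
    theta_smul_le hL _ l x
  rw [hl, mul_zero] at h1
  exact le_antisymm h1 (theta_nonneg hL _ x)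

lemma measurableSet_dependentAt [MeasurableSpace X] [BorelSpace X]
    (hL : ∀ i, LipschitzWith (K i) (h i)) :
    MeasurableSet {x | DependentAt h x} := by
  classical
  rcases Nat.eq_zero_or_pos n with hn | hn
  · subst hn
    have : {x : X | DependentAt h x} = ∅ := by
      ext x
      simp only [Set.mem_setOf_eq, Set.mem_empty_iff_false, iff_false]
      rintro ⟨l, hl0, -⟩
      exact hl0 (Subsingleton.elim l 0)
    rw [this]; exact MeasurableSet.empty
  haveI : Nonempty (Fin n) := ⟨⟨0, hn⟩⟩
  set C : ℝ := ∑ i, (K i : ℝ) with hC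
  have hC0 : 0 ≤ C := Finset.sum_nonneg fun i _ => (K i).coe_nonneg
  obtain ⟨s, hs_count, hs_dense⟩ :=
    TopologicalSpace.exists_countable_dense ↥(Metric.sphere (0 : Fin n → ℝ) 1)
  haveI : Countable ↥s := hs_count.to_subtype
  have hDeq : {x : X | DependentAt h x} =
      ⋂ m : ℕ, ⋃ q : s,
        {x : X | lipUp (comb h ((q : ↥(Metric.sphere (0 : Fin n → ℝ) 1)) : Fin n → ℝ)) x
          < 1 / ((m:ℝ) + 1)} := by
    ext x
    simp only [Set.mem_setOf_eq, Set.mem_iInter, Set.mem_iUnion]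
    constructor
    · rintro ⟨l, hl0, hl⟩ m
      have hnorm : ‖l‖ ≠ 0 := norm_ne_zero_iff.2 hl0
      set l' : Fin n → ℝ := ‖l‖⁻¹ • l with hl'
      have hl'mem : l' ∈ Metric.sphere (0 : Fin n → ℝ) 1 := by
        rw [mem_sphere_zero_iff_norm, hl', norm_smul, norm_inv, norm_norm,
          inv_mul_cancel₀ hnorm]
      have hl'zero : lipUp (comb h l') x = 0 := theta_sphere_zero hL hl0 hl
      have hε : (0:ℝ) < 1 / ((C + 1) * ((m:ℝ) + 1)) := by positivity
      obtain ⟨q, hqs, hqd⟩ := hs_dense.exists_dist_lt (⟨l', hl'mem⟩ :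
        ↥(Metric.sphere (0 : Fin n → ℝ) 1)) hε
      refine ⟨⟨q, hqs⟩, ?_⟩
      have hdist : ‖((q : Fin n → ℝ)) - l'‖ < 1 / ((C + 1) * ((m:ℝ) + 1)) := by
        rw [← dist_eq_norm, dist_comm]
        rw [Subtype.dist_eq] at hqd
        exact hqd
      have hm1 : (0:ℝ) < (m:ℝ) + 1 := by positivity
      calc lipUp (comb h (q : Fin n → ℝ)) x
          ≤ lipUp (comb h l') x + C * ‖(q : Fin n → ℝ) - l'‖ := theta_lip hL _ _ x
        _ = C * ‖(q : Fin n → ℝ) - l'‖ := by rw [hl'zero, zero_add]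
        _ ≤ C * (1 / ((C + 1) * ((m:ℝ) + 1))) :=
            mul_le_mul_of_nonneg_left hdist.le hC0
        _ < 1 / ((m:ℝ) + 1) := by
            rw [mul_one_div, div_lt_div_iff₀ (by positivity) hm1]
            nlinarith
    · intro hx
      choose q hq using hx
      set u : ℕ → Fin n → ℝ := fun m => ((q m : ↥(Metric.sphere (0 : Fin n → ℝ) 1)) :
        Fin n → ℝ) with hu
      have humem : ∀ m, u m ∈ Metric.sphere (0 : Fin n → ℝ) 1 := fun m =>
        (q m : ↥(Metric.sphere (0 : Fin n → ℝ) 1)).2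
      obtain ⟨lam, hlam_mem, φ, hφ, hconv⟩ :=
        (isCompact_sphere (0 : Fin n → ℝ) 1).tendsto_subseq humem
      have hbound : ∀ m, lipUp (comb h lam) x ≤
          1 / ((φ m : ℝ) + 1) + C * ‖lam - u (φ m)‖ := by
        intro m
        calc lipUp (comb h lam) x
            ≤ lipUp (comb h (u (φ m))) x + C * ‖lam - u (φ m)‖ := theta_lip hL _ _ x
          _ ≤ 1 / ((φ m : ℝ) + 1) + C * ‖lam - u (φ m)‖ := by
              linarith [hq (φ m)]
      have htend : Filter.Tendsto
          (fun m => 1 / ((φ m : ℝ) + 1) + C * ‖lam - u (φ m)‖) Filter.atTop (nhds 0) := by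
        have t1 : Filter.Tendsto (fun m => 1 / ((φ m : ℝ) + 1)) Filter.atTop (nhds 0) :=
          tendsto_one_div_add_atTop_nhds_zero_nat.comp hφ.tendsto_atTop
        have t2 : Filter.Tendsto (fun m => ‖lam - u (φ m)‖) Filter.atTop (nhds 0) := by
          have : Filter.Tendsto (fun m => u (φ m)) Filter.atTop (nhds lam) := hconv
          rw [tendsto_iff_norm_sub_tendsto_zero] at this
          simpa [norm_sub_rev] using this
        have := t1.add (t2.const_mul C)
        simpa using this
      have hle : lipUp (comb h lam) x ≤ 0 := ge_of_tendsto' htend hbound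
      have hzero : lipUp (comb h lam) x = 0 :=
        le_antisymm hle (theta_nonneg hL lam x)
      have hlamne : lam ≠ 0 := by
        intro hcon
        rw [mem_sphere_zero_iff_norm, hcon, norm_zero] at hlam_mem
        norm_num at hlam_mem
      exact ⟨lam, hlamne, hzero⟩
  rw [hDeq]
  apply MeasurableSet.iInter
  intro m
  apply MeasurableSet.iUnion
  intro q
  exact measurableSet_lt (measurable_lipUp (lipschitzWith_comb hL _)) measurable_const

lemma exists_delta (hL : ∀ i, LipschitzWith (K i) (h i)) (x : X)
    (hind : ¬ DependentAt h x) :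
    ∃ δ : ℝ, 0 < δ ∧ ∀ lam : Fin n → ℝ, δ * ‖lam‖ ≤ lipUp (comb h lam) x := by
  have hpos : ∀ lam : Fin n → ℝ, lam ≠ 0 → 0 < lipUp (comb h lam) x := by
    intro lam hlam
    rcases (theta_nonneg hL lam x).lt_or_eq with hlt | heq
    · exact hlt
    · exact absurd ⟨lam, hlam, heq.symm⟩ hind
  rcases Nat.eq_zero_or_pos n with hn | hn
  · subst hn
    refine ⟨1, one_pos, ?_⟩
    intro lam
    have : lam = 0 := Subsingleton.elim lam 0
    subst this
    rw [norm_zero, mul_zero]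
    exact theta_nonneg hL 0 x
  haveI : Nonempty (Fin n) := ⟨⟨0, hn⟩⟩
  have hne : (Metric.sphere (0 : Fin n → ℝ) 1).Nonempty :=
    NormedSpace.sphere_nonempty.2 zero_le_one
  obtain ⟨lam0, hmem0, hmin'⟩ := (isCompact_sphere (0 : Fin n → ℝ) 1).exists_isMinOn hne
    (continuous_theta hL x).continuousOn
  have hmin : ∀ l' ∈ Metric.sphere (0 : Fin n → ℝ) 1,
      lipUp (comb h lam0) x ≤ lipUp (comb h l') x := fun l' hl' => hmin' hl'
  have hlam0ne : lam0 ≠ 0 := by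
    intro hcon
    rw [mem_sphere_zero_iff_norm, hcon, norm_zero] at hmem0
    norm_num at hmem0
  refine ⟨lipUp (comb h lam0) x, hpos lam0 hlam0ne, ?_⟩
  intro lam
  rcases eq_or_ne lam 0 with rfl | hlam
  · rw [norm_zero, mul_zero, theta_zero]
  · have hnorm : ‖lam‖ ≠ 0 := norm_ne_zero_iff.2 hlam
    set l' : Fin n → ℝ := ‖lam‖⁻¹ • lam with hl'
    have hl'mem : l' ∈ Metric.sphere (0 : Fin n → ℝ) 1 := by
      rw [mem_sphere_zero_iff_norm, hl', norm_smul, norm_inv, norm_norm,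
        inv_mul_cancel₀ hnorm]
    have h1 : lipUp (comb h lam0) x ≤ lipUp (comb h l') x := hmin l' hl'mem
    have h2 : ‖lam‖ * lipUp (comb h l') x ≤ lipUp (comb h (‖lam‖ • l')) x := by
      have := theta_smul_ge hL hnorm l' x
      rwa [abs_of_nonneg (norm_nonneg lam)] at this
    have h3 : ‖lam‖ • l' = lam := by
      rw [hl', smul_smul, mul_inv_cancel₀ hnorm, one_smul]
    rw [h3] at h2
    calc lipUp (comb h lam0) x * ‖lam‖ ≤ lipUp (comb h l') x * ‖lam‖ :=
          mul_le_mul_of_nonneg_right h1 (norm_nonneg lam)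
      _ = ‖lam‖ * lipUp (comb h l') x := mul_comm _ _
      _ ≤ lipUp (comb h lam) x := h2

end CheegerAux


open CheegerAux

/-- Lemma 4.3 / Lemma `lem-decomp`: under finite dimensionality of the
differentials, every positive measure set contains a positive measure coordinate patch. -/
theorem exists_coordinate_patch_in_positive_measure_set
    (X : Type*) [MetricSpace X] [MeasurableSpace X] [BorelSpace X]
    (μ : Measure X) (N₀ : ℕ)
    (hdim : ∀ f : Fin (N₀ + 1) → X → ℝ, (∀ i, IsLip (f i)) →
      ∀ᵐ x ∂μ, DependentAt f x)
    (A : Set X) (hA : MeasurableSet A) (hApos : 0 < μ A) :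
    ∃ (V : Set X) (N : ℕ) (xs : Fin N → X → ℝ),
      V ⊆ A ∧ MeasurableSet V ∧ 0 < μ V ∧ N ≤ N₀ ∧ (∀ k, IsLip (xs k)) ∧
      ∀ f : X → ℝ, IsLip f →
        (∃ df : X → (Fin N → ℝ), Measurable df ∧
          (∀ᵐ x ∂(μ.restrict V), lipUp (fun y => f y - ∑ k, df x k * xs k y) x = 0)) ∧
        (∀ df dg : X → (Fin N → ℝ), Measurable df → Measurable dg →
          (∀ᵐ x ∂(μ.restrict V), lipUp (fun y => f y - ∑ k, df x k * xs k y) x = 0) →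
          (∀ᵐ x ∂(μ.restrict V), lipUp (fun y => f y - ∑ k, dg x k * xs k y) x = 0) →
          (∀ᵐ x ∂(μ.restrict V), df x = dg x)) := by
  classical
  set Q : ℕ → Prop := fun n => ∃ xs : Fin n → X → ℝ, (∀ k, IsLip (xs k)) ∧
    ∃ S : Set X, MeasurableSet S ∧ S ⊆ A ∧ 0 < μ S ∧ ∀ x ∈ S, ¬ DependentAt xs x with hQdef
  have hQ0 : Q 0 := by
    refine ⟨fun i => i.elim0, fun k => k.elim0, A, hA, subset_rfl, hApos, ?_⟩
    rintro x - ⟨l, hl0, -⟩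
    exact hl0 (Subsingleton.elim l 0)
  have hQtop : ¬ Q (N₀ + 1) := by
    rintro ⟨xs, hxsLip, S, hSmeas, hSA, hSpos, hSind⟩
    have hae := hdim xs hxsLip
    have h0 : μ {x | ¬ DependentAt xs x} = 0 := by
      rw [← MeasureTheory.ae_iff]
      exact hae
    have hS0 : μ S = 0 := measure_mono_null (fun x hx => hSind x hx) h0
    exact absurd hS0 hSpos.ne'
  set N := Nat.findGreatest Q N₀ with hNdef
  have hQN : Q N := Nat.findGreatest_spec (Nat.zero_le N₀) hQ0
  have hNle : N ≤ N₀ := Nat.findGreatest_le N₀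
  have hQsucc : ¬ Q (N + 1) := by
    rcases lt_or_ge N N₀ with hlt | hge
    · exact Nat.findGreatest_is_greatest (Nat.lt_succ_self N) hlt
    · have hNN : N = N₀ := le_antisymm hNle hge
      rw [hNN]; exact hQtop
  obtain ⟨xs, hxsLip, V, hVmeas, hVA, hVpos, hVind⟩ := hQN
  refine ⟨V, N, xs, hVA, hVmeas, hVpos, hNle, hxsLip, ?_⟩
  intro f hf
  obtain ⟨Kf, hKf⟩ := hf
  choose Kxs hKxs using hxsLip
  -- the snoc tuple
  set h : Fin (N+1) → X → ℝ := Fin.snoc xs f with hh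
  set Kh : Fin (N+1) → ℝ≥0 := Fin.snoc Kxs Kf with hKh
  have hLh : ∀ i, LipschitzWith (Kh i) (h i) := by
    intro i
    refine Fin.lastCases ?_ ?_ i
    · show LipschitzWith (Kh (Fin.last N)) (h (Fin.last N))
      rw [hh, hKh]
      simp only [Fin.snoc_last]
      exact hKf
    · intro k
      show LipschitzWith (Kh k.castSucc) (h k.castSucc)
      rw [hh, hKh]
      simp only [Fin.snoc_castSucc]
      exact hKxs k
  set D : Set X := {x | DependentAt h x} with hD
  have hDmeas : MeasurableSet D := measurableSet_dependentAt hLh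
  have hTnull : μ (V \ D) = 0 := by
    by_contra hcon
    apply hQsucc
    exact ⟨h, fun i => ⟨Kh i, hLh i⟩, V \ D, hVmeas.diff hDmeas, fun x hx => hVA hx.1,
      pos_iff_ne_zero.2 hcon, fun x hx => hx.2⟩
  -- snocc embedding and the basic identity
  set snocc : (Fin N → ℝ) → (Fin (N+1) → ℝ) := fun c => Fin.snoc (-c) 1 with hsnocc
  have hcomb_eq : ∀ c : Fin N → ℝ,
      (fun y => f y - ∑ k, c k * xs k y) = comb h (snocc c) := by
    intro c
    funext y
    show f y - ∑ k, c k * xs k y = ∑ i, snocc c i * h i y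
    rw [Fin.sum_univ_castSucc]
    have h1 : ∀ k : Fin N, snocc c k.castSucc * h k.castSucc y = -(c k * xs k y) := by
      intro k
      rw [hsnocc, hh]
      simp only [Fin.snoc_castSucc, Pi.neg_apply, neg_mul]
    have h2 : snocc c (Fin.last N) * h (Fin.last N) y = f y := by
      rw [hsnocc, hh]
      simp only [Fin.snoc_last, one_mul]
    rw [h2, Finset.sum_congr rfl (fun k _ => h1 k), Finset.sum_neg_distrib]
    ring
  -- basic identity between combinations
  have hid : ∀ c z : Fin N → ℝ, comb xs (z - c) =
      fun y => comb h (snocc c) y + (-(comb h (snocc z) y)) := by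
    intro c z
    funext y
    have e1 := congrFun (hcomb_eq c) y
    have e2 := congrFun (hcomb_eq z) y
    show ∑ k, (z - c) k * xs k y = comb h (snocc c) y + (-(comb h (snocc z) y))
    rw [← e1, ← e2]
    simp only [Pi.sub_apply, sub_mul]
    rw [Finset.sum_sub_distrib]
    ring
  -- existence of pointwise differentials
  have hzexists : ∀ x, x ∈ V → x ∈ D → ∃ z : Fin N → ℝ,
      lipUp (comb h (snocc z)) x = 0 := by
    intro x hxV hxD
    obtain ⟨l, hl0, hl⟩ := hxD
    have hl' : lipUp (comb h l) x = 0 := hl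
    have hllast : l (Fin.last N) ≠ 0 := by
      intro hcon
      apply hVind x hxV
      refine ⟨fun k => l k.castSucc, ?_, ?_⟩
      · intro hzero
        apply hl0
        funext i
        refine Fin.lastCases ?_ ?_ i
        · exact hcon
        · intro k; exact congrFun hzero k
      · have hcc : comb xs (fun k => l k.castSucc) = comb h l := by
          funext y
          show ∑ k, l k.castSucc * xs k y = ∑ i, l i * h i y
          rw [Fin.sum_univ_castSucc]
          have : l (Fin.last N) * h (Fin.last N) y = 0 := by rw [hcon, zero_mul]
          rw [this, add_zero]
          apply Finset.sum_congr rfl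
          intro k _
          rw [hh]
          simp only [Fin.snoc_castSucc]
        show lipUp (comb xs (fun k => l k.castSucc)) x = 0
        rw [hcc]
        exact hl'
    refine ⟨fun k => -(l k.castSucc) / l (Fin.last N), ?_⟩
    have hkey : snocc (fun k => -(l k.castSucc) / l (Fin.last N)) =
        (l (Fin.last N))⁻¹ • l := by
      funext i
      refine Fin.lastCases ?_ ?_ i
      · rw [hsnocc]
        simp only [Fin.snoc_last, Pi.smul_apply, smul_eq_mul]
        rw [inv_mul_cancel₀ hllast]
      · intro k
        rw [hsnocc]
        simp only [Fin.snoc_castSucc, Pi.neg_apply, Pi.smul_apply, smul_eq_mul]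
        rw [neg_div, neg_neg, div_eq_inv_mul]
    rw [hkey]
    have h1 := theta_smul_le hLh (l (Fin.last N))⁻¹ l x
    rw [hl', mul_zero] at h1
    exact le_antisymm h1 (theta_nonneg hLh _ x)
  -- lower bound via independence
  have hlower : ∀ x, ∀ δ : ℝ,
      (∀ lam : Fin N → ℝ, δ * ‖lam‖ ≤ lipUp (comb xs lam) x) →
      ∀ c z : Fin N → ℝ, lipUp (comb h (snocc z)) x = 0 →
      δ * ‖c - z‖ ≤ lipUp (comb h (snocc c)) x := by
    intro x δ hδ c z hz
    have h2 : lipUp (comb xs (z - c)) x ≤ lipUp (comb h (snocc c)) x := by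
      rw [hid c z]
      calc lipUp (fun y => comb h (snocc c) y + (-(comb h (snocc z) y))) x
          ≤ lipUp (comb h (snocc c)) x + lipUp (fun y => -(comb h (snocc z) y)) x :=
            lipUp_add_le (lipschitzWith_comb hLh _) (lipschitzWith_comb hLh _).neg x
        _ = lipUp (comb h (snocc c)) x + lipUp (comb h (snocc z)) x := by
            rw [lipUp_neg]
        _ = lipUp (comb h (snocc c)) x := by rw [hz, add_zero]
    calc δ * ‖c - z‖ = δ * ‖z - c‖ := by rw [norm_sub_rev]
      _ ≤ lipUp (comb xs (z - c)) x := hδ (z - c)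
      _ ≤ lipUp (comb h (snocc c)) x := h2
  -- Lipschitz continuity of Ψ in the coefficients
  set Cxs : ℝ := ∑ k, (Kxs k : ℝ) with hCxs
  have hCxs0 : 0 ≤ Cxs := Finset.sum_nonneg fun k _ => (Kxs k).coe_nonneg
  have hupper : ∀ x, ∀ a b : Fin N → ℝ,
      lipUp (comb h (snocc a)) x ≤ lipUp (comb h (snocc b)) x + Cxs * ‖a - b‖ := by
    intro x a b
    have hidab : comb h (snocc a) = fun y => comb h (snocc b) y + comb xs (b - a) y := by
      have := hid b a  -- comb xs (a - b) = Ψ_b - Ψ_a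
      funext y
      have e1 := congrFun (hcomb_eq a) y
      have e2 := congrFun (hcomb_eq b) y
      show comb h (snocc a) y = comb h (snocc b) y + comb xs (b - a) y
      rw [← e1, ← e2]
      show f y - ∑ k, a k * xs k y =
        (f y - ∑ k, b k * xs k y) + ∑ k, (b - a) k * xs k y
      simp only [Pi.sub_apply, sub_mul]
      rw [Finset.sum_sub_distrib]
      ring
    rw [hidab]
    calc lipUp (fun y => comb h (snocc b) y + comb xs (b - a) y) x
        ≤ lipUp (comb h (snocc b)) x + lipUp (comb xs (b - a)) x :=
          lipUp_add_le (lipschitzWith_comb hLh _) (lipschitzWith_comb hKxs _) x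
      _ ≤ lipUp (comb h (snocc b)) x + Cxs * ‖b - a‖ := by
          linarith [theta_norm_le hKxs (b - a) x]
      _ = lipUp (comb h (snocc b)) x + Cxs * ‖a - b‖ := by rw [norm_sub_rev]
  -- rational grid
  obtain ⟨e, he⟩ := exists_surjective_nat (Fin N → ℚ)
  set em : ℕ → Fin N → ℝ := fun m k => ((e m k : ℚ) : ℝ) with hem
  set P : ℕ → ℕ → X → Prop := fun nn m x =>
    lipUp (comb h (snocc (em m))) x < 1 / ((nn:ℝ)+1) ∨
    ∀ j, ¬ (lipUp (comb h (snocc (em j))) x < 1 / ((nn:ℝ)+1)) with hP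
  have hPex : ∀ nn x, ∃ m, P nn m x := by
    intro nn x
    by_cases hc : ∃ m, lipUp (comb h (snocc (em m))) x < 1/((nn:ℝ)+1)
    · obtain ⟨m, hm⟩ := hc; exact ⟨m, Or.inl hm⟩
    · push_neg at hc
      exact ⟨0, Or.inr (fun j => not_lt.2 (hc j))⟩
  have hPmeas : ∀ nn m, MeasurableSet {x | P nn m x} := by
    intro nn m
    have hset : {x | P nn m x} =
        {x | lipUp (comb h (snocc (em m))) x < 1 / ((nn:ℝ)+1)} ∪
        ⋂ j, {x | lipUp (comb h (snocc (em j))) x < 1 / ((nn:ℝ)+1)}ᶜ := by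
      ext x
      simp only [hP, Set.mem_setOf_eq, Set.mem_union, Set.mem_iInter, Set.mem_compl_iff]
    rw [hset]
    refine MeasurableSet.union ?_ (MeasurableSet.iInter fun j => MeasurableSet.compl ?_) <;>
      exact measurableSet_lt (measurable_lipUp (lipschitzWith_comb hLh _)) measurable_const
  set cf : ℕ → X → Fin N → ℝ := fun nn x => em (Nat.find (hPex nn x)) with hcf
  have hcfmeas : ∀ nn, Measurable (cf nn) := by
    intro nn
    exact Measurable.find (f := fun m (_ : X) => em m) (fun m => measurable_const)
      (hPmeas nn) (hPex nn)
  -- convergence to the differential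
  have hfinal : ∀ x, x ∈ V → x ∈ D → ∃ z : Fin N → ℝ,
      lipUp (comb h (snocc z)) x = 0 ∧
      Filter.Tendsto (fun nn => cf nn x) Filter.atTop (nhds z) := by
    intro x hxV hxD
    obtain ⟨z, hz⟩ := hzexists x hxV hxD
    obtain ⟨δ, hδ0, hδ⟩ := exists_delta hKxs x (hVind x hxV)
    refine ⟨z, hz, ?_⟩
    have hself : ∀ nn : ℕ, lipUp (comb h (snocc (cf nn x))) x < 1/((nn:ℝ)+1) := by
      intro nn
      have hε : (0:ℝ) < 1/((Cxs+1) * ((nn:ℝ)+1)) := by positivity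
      have hqex : ∀ k, ∃ q : ℚ, |z k - (q:ℝ)| < 1/((Cxs+1)*((nn:ℝ)+1)) :=
        fun k => exists_rat_near (z k) hε
      choose q hq using hqex
      obtain ⟨m, hm⟩ := he q
      have hnormz : ‖em m - z‖ ≤ 1/((Cxs+1)*((nn:ℝ)+1)) := by
        rw [pi_norm_le_iff_of_nonneg hε.le]
        intro k
        rw [Real.norm_eq_abs]
        have : (em m - z) k = (q k : ℝ) - z k := by
          rw [hem]
          simp only [Pi.sub_apply]
          rw [hm]
        rw [this, abs_sub_comm]
        exact (hq k).le
      have hwit : lipUp (comb h (snocc (em m))) x < 1/((nn:ℝ)+1) := by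
        have h1 := hupper x (em m) z
        rw [hz, zero_add] at h1
        have h2 : Cxs * ‖em m - z‖ ≤ Cxs * (1/((Cxs+1)*((nn:ℝ)+1))) :=
          mul_le_mul_of_nonneg_left hnormz hCxs0
        have h3 : Cxs * (1/((Cxs+1)*((nn:ℝ)+1))) < 1/((nn:ℝ)+1) := by
          rw [mul_one_div, div_lt_div_iff₀ (by positivity) (by positivity)]
          have hnn : (0:ℝ) < (nn:ℝ)+1 := by positivity
          nlinarith
        linarith
      have hfind := Nat.find_spec (hPex nn x)
      rcases hfind with hgood | hbad
      · exact hgood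
      · exact absurd hwit (hbad m)
    have hdist : ∀ nn : ℕ, ‖cf nn x - z‖ ≤ (1/δ) * (1/((nn:ℝ)+1)) := by
      intro nn
      have h1 : δ * ‖cf nn x - z‖ ≤ lipUp (comb h (snocc (cf nn x))) x :=
        hlower x δ hδ (cf nn x) z hz
      have h2 := hself nn
      rw [mul_comm] at h1
      rw [mul_comm, ← div_eq_mul_one_div, le_div_iff₀ hδ0]
      linarith
    rw [tendsto_iff_norm_sub_tendsto_zero]
    apply squeeze_zero (fun nn => norm_nonneg _) hdist
    have := tendsto_one_div_add_atTop_nhds_zero_nat.const_mul (1/δ)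
    simpa using this
  -- the measurable differential
  set df : X → Fin N → ℝ := fun x k =>
    Filter.limsup (fun nn => cf nn x k) Filter.atTop with hdf
  have hdfmeas : Measurable df := by
    apply measurable_pi_lambda
    intro k
    apply Measurable.limsup
    intro nn
    exact (measurable_pi_apply k).comp (hcfmeas nn)
  have hdfeq : ∀ x, x ∈ V → x ∈ D → lipUp (comb h (snocc (df x))) x = 0 := by
    intro x hxV hxD
    obtain ⟨z, hz, hconv⟩ := hfinal x hxV hxD
    have hdfz : df x = z := by
      funext k
      have hk : Filter.Tendsto (fun nn => cf nn x k) Filter.atTop (nhds (z k)) :=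
        ((continuous_apply k).continuousAt.tendsto.comp hconv)
      exact hk.limsup_eq
    rw [hdfz]
    exact hz
  -- a.e. facts
  have haeD : ∀ᵐ x ∂(μ.restrict V), x ∈ D := by
    rw [MeasureTheory.ae_restrict_iff' hVmeas]
    have h2 : ∀ᵐ x ∂μ, x ∉ V \ D := by
      rw [MeasureTheory.ae_iff]
      simpa only [not_not, Set.setOf_mem_eq] using hTnull
    filter_upwards [h2] with x hx hxV
    by_contra hxD
    exact hx ⟨hxV, hxD⟩
  have haeV : ∀ᵐ x ∂(μ.restrict V), x ∈ V := MeasureTheory.ae_restrict_mem hVmeas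
  constructor
  · -- existence
    refine ⟨df, hdfmeas, ?_⟩
    filter_upwards [haeD, haeV] with x hxD hxV
    rw [hcomb_eq (df x)]
    exact hdfeq x hxV hxD
  · -- uniqueness
    intro df1 dg hm1 hm2 H1 H2
    filter_upwards [haeV, H1, H2] with x hxV h1 h2
    by_contra hne
    apply hVind x hxV
    refine ⟨df1 x - dg x, sub_ne_zero.2 hne, ?_⟩
    rw [hcomb_eq (df1 x)] at h1
    rw [hcomb_eq (dg x)] at h2
    show lipUp (comb xs (df1 x - dg x)) x = 0
    have hzero : lipUp (comb xs (df1 x - dg x)) x ≤ 0 := by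
      rw [hid (dg x) (df1 x)]
      calc lipUp (fun y => comb h (snocc (dg x)) y + (-(comb h (snocc (df1 x)) y))) x
          ≤ lipUp (comb h (snocc (dg x))) x + lipUp (fun y => -(comb h (snocc (df1 x)) y)) x :=
            lipUp_add_le (lipschitzWith_comb hLh _) (lipschitzWith_comb hLh _).neg x
        _ = lipUp (comb h (snocc (dg x))) x + lipUp (comb h (snocc (df1 x))) x := by
            rw [lipUp_neg]
        _ = 0 := by rw [h1, h2, add_zero]
    exact le_antisymm hzero (theta_nonneg hKxs _ x)
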